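/- Under the non-split explicit scheme, the update for qⁿ⁺¹ obtained by eliminating pⁿ⁺¹ᐟ² and ψⁿ⁺¹ᐟ² takes the form (I + αβᵀ)qⁿ⁺¹ = 2qⁿ - 2kα ψⁿ⁻¹ᐟ² - (I - αβᵀ)qⁿ⁻¹ with α = (k/2)M⁻¹gⁿ, β = (k/2)gⁿ; that is, any sequences satisfying the three-equation scheme (fd1) satisfy this linear update, and conversely given qⁿ, qⁿ⁻¹, ψⁿ⁻¹ᐟ² this update together with the ψ-update uniquely determines (qⁿ⁺¹, pⁿ⁺¹ᐟ², ψⁿ⁺¹ᐟ²). -/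

import Mathlib

open Matrix

lemma vecMulVec_mulVec_eq {N : ℕ} (α β x : Fin N → ℝ) :
    (vecMulVec α β).mulVec x = (β ⬝ᵥ x) • α := by
  funext i
  simp only [vecMulVec, mulVec, dotProduct, Pi.smul_apply, smul_eq_mul, of_apply,
    Finset.sum_mul, Finset.mul_sum]
  exact Finset.sum_congr rfl fun j _ => by ring

/-- One step of the non-split scheme (fd1): eliminating `pⁿ⁺¹ᐟ²` and `ψⁿ⁺¹ᐟ²`
yields the linear update `(I + αβᵀ)qⁿ⁺¹ = 2qⁿ - 2kα ψⁿ⁻¹ᐟ² - (I - αβᵀ)qⁿ⁻¹`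
with `α = (k/2)M⁻¹g`, `β = (k/2)g`; conversely, given `qⁿ, qⁿ⁻¹, ψⁿ⁻¹ᐟ², pⁿ⁻¹ᐟ²`,
the scheme uniquely determines `(qⁿ⁺¹, pⁿ⁺¹ᐟ², ψⁿ⁺¹ᐟ²)`.
Here `qm, qn, qp` denote `qⁿ⁻¹, qⁿ, qⁿ⁺¹`; `pm, pp` denote `pⁿ⁻¹ᐟ², pⁿ⁺¹ᐟ²`;
`ψm, ψp` denote `ψⁿ⁻¹ᐟ², ψⁿ⁺¹ᐟ²`; `g` denotes `gⁿ`. -/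
theorem stmt_17 {N : ℕ} (k : ℝ) (hk : 0 < k)
    (M : Matrix (Fin N) (Fin N) ℝ) (hM : M.PosDef)
    (g qm qn qp pm pp : Fin N → ℝ) (ψm ψp : ℝ)
    (α β : Fin N → ℝ) (hα : α = (k / 2) • M⁻¹.mulVec g) (hβ : β = (k / 2) • g)
    (hq0 : qn = qm + k • M⁻¹.mulVec pm)
    (hq : qp = qn + k • M⁻¹.mulVec pp)
    (hp : pp = pm - (k / 2 * (ψp + ψm)) • g)
    (hψ : ψp = ψm + (1 / 2) * (g ⬝ᵥ (qp - qm))) :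
    ((1 + vecMulVec α β).mulVec qp
        = (2 : ℝ) • qn - (2 * k * ψm) • α - (1 - vecMulVec α β).mulVec qm) ∧
    (∃! w : (Fin N → ℝ) × (Fin N → ℝ) × ℝ,
      w.1 = qn + k • M⁻¹.mulVec w.2.1 ∧
      w.2.1 = pm - (k / 2 * (w.2.2 + ψm)) • g ∧
      w.2.2 = ψm + (1 / 2) * (g ⬝ᵥ (w.1 - qm))) := by
  have hpm : k • M⁻¹.mulVec pm = qn - qm := by rw [hq0]; abel
  -- Key computation: any solution of the one-step scheme satisfies the linear update.
  have key : ∀ (q p : Fin N → ℝ) (ψ : ℝ),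
      q = qn + k • M⁻¹.mulVec p →
      p = pm - (k / 2 * (ψ + ψm)) • g →
      ψ = ψm + (1 / 2) * (g ⬝ᵥ (q - qm)) →
      q + (β ⬝ᵥ q) • α
        = (2 : ℝ) • qn - (2 * k * ψm) • α - (qm - (β ⬝ᵥ qm) • α) := by
    intro q p ψ hq' hp' hψ'
    have h1 : q = (2 : ℝ) • qn - qm - (k * (ψ + ψm)) • α := by
      rw [hq', hp', mulVec_sub, mulVec_smul, smul_sub, hpm, hα]
      module
    have hbd : β ⬝ᵥ q - β ⬝ᵥ qm = k / 2 * (g ⬝ᵥ (q - qm)) := by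
      rw [hβ, ← dotProduct_sub]
      simp [smul_dotProduct, dotProduct_sub]
      ring
    have h2 : (k * (ψ + ψm)) • α
        = (2 * k * ψm) • α + (β ⬝ᵥ q - β ⬝ᵥ qm) • α := by
      rw [hbd, hψ']
      match_scalars
      ring
    set s := β ⬝ᵥ q with hs
    set t := β ⬝ᵥ qm with ht
    rw [h2] at h1
    rw [h1]
    module
  have hmain := key qp pp ψp hq hp hψ
  -- β ⬝ᵥ α ≥ 0
  have hba : 0 ≤ β ⬝ᵥ α := by
    rw [hα, hβ, dotProduct_smul, smul_dotProduct]
    have : (0:ℝ) ≤ g ⬝ᵥ M⁻¹.mulVec g := by simpa using hM.inv.posSemidef.dotProduct_mulVec_nonneg g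
    positivity
  -- injectivity of x ↦ x + (β ⬝ᵥ x) • α
  have hinj : ∀ x y : Fin N → ℝ,
      x + (β ⬝ᵥ x) • α = y + (β ⬝ᵥ y) • α → x = y := by
    intro x y hxy
    have hd : (x - y) + (β ⬝ᵥ (x - y)) • α = 0 := by
      rw [dotProduct_sub, sub_smul]
      rw [show (x - y) + ((β ⬝ᵥ x) • α - (β ⬝ᵥ y) • α)
          = (x + (β ⬝ᵥ x) • α) - (y + (β ⬝ᵥ y) • α) by abel, hxy]
      abel
    have hbd : β ⬝ᵥ ((x - y) + (β ⬝ᵥ (x - y)) • α) = 0 := by rw [hd]; simp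
    rw [dotProduct_add, dotProduct_smul, smul_eq_mul] at hbd
    have hfac : (β ⬝ᵥ (x - y)) * (1 + β ⬝ᵥ α) = 0 := by linarith
    have hpos : (0:ℝ) < 1 + β ⬝ᵥ α := by linarith
    have hz : β ⬝ᵥ (x - y) = 0 := by
      rcases mul_eq_zero.mp hfac with h | h
      · exact h
      · linarith
    have : x - y = 0 := by
      have := hd
      rw [hz] at this
      simpa using this
    have := sub_eq_zero.mp this
    exact this
  constructor
  · -- the linear update
    rw [add_mulVec, sub_mulVec, one_mulVec, one_mulVec,
      vecMulVec_mulVec_eq, vecMulVec_mulVec_eq]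
    exact hmain
  · -- unique solvability
    refine ⟨(qp, pp, ψp), ⟨hq, hp, hψ⟩, ?_⟩
    rintro ⟨q, p, ψ⟩ ⟨hq', hp', hψ'⟩
    dsimp only at hq' hp' hψ' ⊢
    have h1 := key q p ψ hq' hp' hψ'
    have hq_eq : q = qp := hinj q qp (h1.trans hmain.symm)
    have hψ_eq : ψ = ψp := by rw [hψ', hψ, hq_eq]
    have hp_eq : p = pp := by rw [hp', hp, hψ_eq]
    simp [Prod.ext_iff, hq_eq, hψ_eq, hp_eq]
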